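/- arXiv:1911.11732 — 2 statements merged into one kernel-verified Lean document; each statement's English description precedes it below -/
import Mathlib

section
/- For all p > 0 and q > 0 there is a constant C = C(p,q) > 0 such that for all t > 0 and all (x,y,z) ∈ ℝ³ \ {0}: g_t^p · ḡ_t^q ≤ C · R^{−(p+q)} · t^{−(p+q)/2}, where g_t = (1+tz²κ(tf))^{−1/2}, ḡ_t = (1+tr²κ(−tf))^{−1/2}, r²=x²+y², f=r²−z², R²=x²+y²+z², and κ(s)=(1−e^{−2s})/s (κ(0)=2). -/
/-- f(x,y,z) = x² + y² − z². -/
def fCas (p : ℝ × ℝ × ℝ) : ℝ := p.1 ^ 2 + p.2.1 ^ 2 - p.2.2 ^ 2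

/-- The vector field W = −z²x ∂x − z²y ∂y − (x²+y²)z ∂z. -/
def Wfield (p : ℝ × ℝ × ℝ) : ℝ × ℝ × ℝ :=
  (-(p.2.2 ^ 2) * p.1, -(p.2.2 ^ 2) * p.2.1, -(p.1 ^ 2 + p.2.1 ^ 2) * p.2.2)

/-- κ(s) = ∫₀² e^{−su} du = (1 − e^{−2s})/s, with κ(0) = 2. -/
noncomputable def kap (s : ℝ) : ℝ := ∫ u in (0:ℝ)..2, Real.exp (-(s * u))

/-- g_t = (1 + t z² κ(tf))^{−1/2}. -/
noncomputable def gfun (t : ℝ) (p : ℝ × ℝ × ℝ) : ℝ :=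
  1 / Real.sqrt (1 + t * p.2.2 ^ 2 * kap (t * fCas p))

/-- ḡ_t = (1 + t r² κ(−tf))^{−1/2}. -/
noncomputable def gbar (t : ℝ) (p : ℝ × ℝ × ℝ) : ℝ :=
  1 / Real.sqrt (1 + t * (p.1 ^ 2 + p.2.1 ^ 2) * kap (-(t * fCas p)))

/-- The explicit forward flow of W: (x g_t, y g_t, z ḡ_t). -/
noncomputable def flowW (p : ℝ × ℝ × ℝ) (t : ℝ) : ℝ × ℝ × ℝ :=
  (p.1 * gfun t p, p.2.1 * gfun t p, p.2.2 * gbar t p)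

lemma kap_zero : kap 0 = 2 := by simp [kap]

lemma kap_eq (s : ℝ) (hs : s ≠ 0) : kap s = (1 - Real.exp (-(2*s))) / s := by
  have h : ∀ u ∈ Set.uIcc (0:ℝ) 2, HasDerivAt (fun u => -Real.exp (-(s*u)) / s)
      (Real.exp (-(s*u))) u := by
    intro u _
    have h1 : HasDerivAt (fun u : ℝ => -(s*u)) (-s) u := by
      simpa using ((hasDerivAt_id u).const_mul (-s))
    have h2 := (h1.exp.neg).div_const s
    refine h2.congr_deriv ?_
    rw [mul_neg, neg_neg, mul_div_assoc, div_self hs, mul_one]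
  have hint : IntervalIntegrable (fun u => Real.exp (-(s*u))) MeasureTheory.volume 0 2 := by
    apply Continuous.intervalIntegrable; continuity
  have := intervalIntegral.integral_eq_sub_of_hasDerivAt h hint
  rw [kap, this]
  field_simp
  rw [mul_zero, neg_zero, Real.exp_zero]; ring

lemma s_mul_kap (s : ℝ) : s * kap s = 1 - Real.exp (-(2*s)) := by
  rcases eq_or_ne s 0 with rfl | hs
  · simp
  · rw [kap_eq s hs]; field_simp

lemma kap_pos (s : ℝ) : 0 < kap s := by
  rcases lt_trichotomy s 0 with h | rfl | h
  · rw [kap_eq s h.ne]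
    apply div_pos_of_neg_of_neg _ h
    have : 1 < Real.exp (-(2*s)) := by
      rw [Real.one_lt_exp_iff]; linarith
    linarith
  · rw [kap_zero]; norm_num
  · rw [kap_eq s h.ne']
    apply div_pos _ h
    have : Real.exp (-(2*s)) < 1 := by
      rw [Real.exp_lt_one_iff]; linarith
    linarith

lemma kap_neg_eq (s : ℝ) : kap (-s) = Real.exp (2*s) * kap s := by
  rcases eq_or_ne s 0 with rfl | hs
  · simp
  · have he : Real.exp (2*s) * Real.exp (-(2*s)) = 1 := by
      rw [← Real.exp_add]; simp
    have h1 := s_mul_kap s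
    have h := s_mul_kap (-s)
    rw [show -(2 * -s) = 2*s by ring] at h
    have hL : s * kap (-s) = Real.exp (2*s) - 1 := by linear_combination -h
    have key : s * kap (-s) = s * (Real.exp (2*s) * kap s) := by
      linear_combination hL - Real.exp (2*s) * h1 + he
    exact mul_left_cancel₀ hs key

/-- Core inequality: ε (1+2(v+s)) ≤ (1 + v κ(s)) e^{2εs} for s,v ≥ 0, 0 < ε ≤ 1. -/
lemma core_ineq (s v ε : ℝ) (hs : 0 ≤ s) (hv : 0 ≤ v) (hε : 0 < ε) (hε1 : ε ≤ 1) :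
    ε * (1 + 2*(v+s)) ≤ (1 + v * kap s) * Real.exp (2*ε*s) := by
  have he : (0:ℝ) < Real.exp (2*ε*s) := Real.exp_pos _
  have h1 : ε * (1 + 2*s) ≤ Real.exp (2*ε*s) := by
    have := Real.add_one_le_exp (2*ε*s)
    nlinarith
  have h2 : ε * (2*v) ≤ v * kap s * Real.exp (2*ε*s) := by
    have key : 2*ε ≤ kap s * Real.exp (2*ε*s) := by
      rcases eq_or_lt_of_le hs with rfl | hs'
      · rw [kap_zero]
        nlinarith [Real.one_le_exp (by positivity : (0:ℝ) ≤ 2*ε*0)]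
      · -- s > 0: 2εs ≤ s κ(s) e^{2εs}
        have hk := s_mul_kap s
        have hmono : Real.exp (-(2*s)) ≤ Real.exp (-(2*ε*s)) := by
          apply Real.exp_le_exp.mpr; nlinarith
        have hinv : Real.exp (-(2*ε*s)) * Real.exp (2*ε*s) = 1 := by
          rw [← Real.exp_add]; simp
        have h3 := Real.add_one_le_exp (2*ε*s)
        -- (1 - exp(-2s)) * e ≥ (1 - exp(-2εs)) * e = e - 1 ≥ 2εs
        have h4 : 2*ε*s ≤ (1 - Real.exp (-(2*s))) * Real.exp (2*ε*s) := by
          nlinarith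
        rw [← hk] at h4
        have := mul_le_mul_of_nonneg_left h4 (le_of_lt (inv_pos.mpr hs'))
        calc 2*ε = s⁻¹ * (2*ε*s) := by field_simp
          _ ≤ s⁻¹ * (s * kap s * Real.exp (2*ε*s)) := by
              apply mul_le_mul_of_nonneg_left _ (le_of_lt (inv_pos.mpr hs'))
              nlinarith
          _ = kap s * Real.exp (2*ε*s) := by field_simp
    nlinarith
  have hk := kap_pos s
  nlinarith

/-- Master identity: 1 + w κ(−s) = e^{2s}(1 + u κ(s)) when w = u + s. -/
lemma key_id (s w u : ℝ) (hwu : w = u + s) :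
    1 + w * kap (-s) = Real.exp (2*s) * (1 + u * kap s) := by
  have h1 := s_mul_kap s
  have h2 := kap_neg_eq s
  have he : Real.exp (2*s) * Real.exp (-(2*s)) = 1 := by
    rw [← Real.exp_add]; simp
  subst hwu
  rw [h2]
  linear_combination Real.exp (2*s) * h1 - he

lemma exp_rpow' (a b : ℝ) : Real.exp a ^ b = Real.exp (a*b) := by
  rw [Real.rpow_def_of_pos (Real.exp_pos a), Real.log_exp]

/-- For p, q > 0 there is C > 0 with g_t^p ḡ_t^q ≤ C R^{−(p+q)} t^{−(p+q)/2}
for all t > 0 and all nonzero (x,y,z). -/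
theorem gfun_gbar_decay (p q : ℝ) (hp : 0 < p) (hq : 0 < q) :
    ∃ C > (0:ℝ), ∀ t > (0:ℝ), ∀ v : ℝ × ℝ × ℝ, v ≠ 0 →
      gfun t v ^ p * gbar t v ^ q ≤
        C * Real.sqrt (v.1 ^ 2 + v.2.1 ^ 2 + v.2.2 ^ 2) ^ (-(p + q))
          * t ^ (-((p + q) / 2)) := by
  have hpq : 0 < p + q := by linarith
  have hC0 : (0:ℝ) < max ((p+q)/p) ((p+q)/q) :=
    lt_max_of_lt_left (by positivity)
  set C0 : ℝ := max ((p+q)/p) ((p+q)/q) with hC0def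
  refine ⟨C0 ^ ((p+q)/2), Real.rpow_pos_of_pos hC0 _, ?_⟩
  intro t ht v hv
  obtain ⟨x, y, z⟩ := v
  show (1 / Real.sqrt (1 + t * z^2 * kap (t * (x^2+y^2-z^2)))) ^ p *
      (1 / Real.sqrt (1 + t * (x^2+y^2) * kap (-(t * (x^2+y^2-z^2))))) ^ q ≤
      C0 ^ ((p+q)/2) * Real.sqrt (x^2+y^2+z^2) ^ (-(p+q)) * t ^ (-((p+q)/2))
  have hne : ¬ (x = 0 ∧ y = 0 ∧ z = 0) := by
    simpa [Prod.ext_iff] using hv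
  have hR2 : 0 < x^2 + y^2 + z^2 := by
    rcases not_and_or.mp hne with h | h'
    · positivity
    rcases not_and_or.mp h' with h | h
    · positivity
    · positivity
  set S : ℝ := t * (x^2 + y^2 - z^2) with hSdef
  set A : ℝ := 1 + t * z^2 * kap S with hAdef
  set B : ℝ := 1 + t * (x^2 + y^2) * kap (-S) with hBdef
  have hA1 : 1 ≤ A := by
    have := mul_nonneg (mul_nonneg ht.le (sq_nonneg z)) (kap_pos S).le
    rw [hAdef]; linarith
  have hA0 : 0 < A := lt_of_lt_of_le one_pos hA1
  have hBA : B = Real.exp (2*S) * A :=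
    key_id S (t*(x^2+y^2)) (t*z^2) (by rw [hSdef]; ring)
  have hB0 : 0 < B := by rw [hBA]; positivity
  set E : ℝ := Real.exp (2*(q/(p+q))*S) with hEdef
  clear_value S A B E
  have hE0 : (0:ℝ) < E := by rw [hEdef]; exact Real.exp_pos _
  -- base inequality
  have base : t * (x^2+y^2+z^2) ≤ C0 * (A * E) := by
    rcases le_or_gt 0 S with hs | hs
    · have hcore := core_ineq S (t*z^2) (q/(p+q)) hs (by positivity) (by positivity)
        ((div_le_one hpq).mpr (by linarith))
      rw [← hAdef, ← hEdef] at hcore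
      have h5 : t*(x^2+y^2+z^2) ≤ 1 + 2*(t*z^2 + S) := by
        rw [hSdef] at hs ⊢; nlinarith
      have h6 : (q/(p+q)) * (t*(x^2+y^2+z^2)) ≤ A * E := by
        refine le_trans ?_ hcore
        have hd : (0:ℝ) < q/(p+q) := by positivity
        nlinarith
      calc t*(x^2+y^2+z^2) = ((p+q)/q) * ((q/(p+q)) * (t*(x^2+y^2+z^2))) := by
            field_simp
        _ ≤ ((p+q)/q) * (A * E) :=
            mul_le_mul_of_nonneg_left h6 (by positivity)
        _ ≤ C0 * (A * E) :=
            mul_le_mul_of_nonneg_right (le_max_right _ _) (by positivity)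
    · have hs' : (0:ℝ) ≤ -S := by linarith
      have hcore := core_ineq (-S) (t*(x^2+y^2)) (p/(p+q)) hs' (by positivity)
        (by positivity) ((div_le_one hpq).mpr (by linarith))
      have hrhs : (1 + t*(x^2+y^2) * kap (-S)) * Real.exp (2*(p/(p+q))*(-S)) = A * E := by
        have hexp : Real.exp (2*S) * Real.exp (2*(p/(p+q))*(-S)) = E := by
          rw [hEdef, ← Real.exp_add]; congr 1; field_simp; ring
        calc (1 + t*(x^2+y^2) * kap (-S)) * Real.exp (2*(p/(p+q))*(-S))
            = B * Real.exp (2*(p/(p+q))*(-S)) := by rw [hBdef]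
          _ = A * (Real.exp (2*S) * Real.exp (2*(p/(p+q))*(-S))) := by
              rw [hBA]; ring
          _ = A * E := by rw [hexp]
      rw [hrhs] at hcore
      have h5 : t*(x^2+y^2+z^2) ≤ 1 + 2*(t*(x^2+y^2) + -S) := by
        rw [hSdef] at hs ⊢; nlinarith
      have h6 : (p/(p+q)) * (t*(x^2+y^2+z^2)) ≤ A * E := by
        refine le_trans ?_ hcore
        have hd : (0:ℝ) < p/(p+q) := by positivity
        nlinarith
      calc t*(x^2+y^2+z^2) = ((p+q)/p) * ((p/(p+q)) * (t*(x^2+y^2+z^2))) := by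
            field_simp
        _ ≤ ((p+q)/p) * (A * E) :=
            mul_le_mul_of_nonneg_left h6 (by positivity)
        _ ≤ C0 * (A * E) :=
            mul_le_mul_of_nonneg_right (le_max_left _ _) (by positivity)
  -- raise to power (p+q)/2
  have hM : (0:ℝ) < (p+q)/2 := by positivity
  have htR2 : (0:ℝ) < t * (x^2+y^2+z^2) := by positivity
  have hpow : (t * (x^2+y^2+z^2)) ^ ((p+q)/2)
      ≤ C0 ^ ((p+q)/2) * (A ^ ((p+q)/2) * Real.exp (q*S)) := by
    have h1 := Real.rpow_le_rpow htR2.le base hM.le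
    have h2 : (C0 * (A * E)) ^ ((p+q)/2)
        = C0 ^ ((p+q)/2) * (A ^ ((p+q)/2) * E ^ ((p+q)/2)) := by
      rw [Real.mul_rpow hC0.le (by positivity), Real.mul_rpow hA0.le hE0.le]
    have h3 : E ^ ((p+q)/2) = Real.exp (q*S) := by
      rw [hEdef, exp_rpow']
      congr 1
      field_simp
    rw [h2, h3] at h1
    exact h1
  -- rewrite LHS of goal
  have hgf : (1 / Real.sqrt A) ^ p = A ^ (-(p/2)) := by
    rw [Real.sqrt_eq_rpow, one_div, ← Real.rpow_neg hA0.le, ← Real.rpow_mul hA0.le]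
    congr 1; ring
  have hgb : (1 / Real.sqrt B) ^ q = A ^ (-(q/2)) * Real.exp (-(q*S)) := by
    rw [Real.sqrt_eq_rpow, one_div, ← Real.rpow_neg hB0.le, ← Real.rpow_mul hB0.le,
      hBA, Real.mul_rpow (Real.exp_pos _).le hA0.le, exp_rpow', mul_comm]
    congr 2 <;> ring
  rw [hgf, hgb]
  -- rewrite RHS of goal
  have hRHS : C0 ^ ((p+q)/2) * Real.sqrt (x^2+y^2+z^2) ^ (-(p+q)) * t ^ (-((p+q)/2))
      = C0 ^ ((p+q)/2) * ((t * (x^2+y^2+z^2)) ^ ((p+q)/2))⁻¹ := by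
    rw [Real.sqrt_eq_rpow, ← Real.rpow_mul hR2.le,
      show (1:ℝ)/2 * (-(p+q)) = -((p+q)/2) by ring, mul_assoc,
      ← Real.mul_rpow hR2.le ht.le, mul_comm (x^2+y^2+z^2) t,
      Real.rpow_neg htR2.le]
  rw [hRHS]
  -- conclude
  have hLHS : A ^ (-(p/2)) * (A ^ (-(q/2)) * Real.exp (-(q*S)))
      = (A ^ ((p+q)/2) * Real.exp (q*S))⁻¹ := by
    rw [← mul_assoc, ← Real.rpow_add hA0, Real.exp_neg, mul_inv,
      ← Real.rpow_neg hA0.le]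
    congr 2
    ring
  rw [hLHS]
  have ha : (0:ℝ) < A ^ ((p+q)/2) * Real.exp (q*S) := by positivity
  have hb : (0:ℝ) < (t * (x^2+y^2+z^2)) ^ ((p+q)/2) := Real.rpow_pos_of_pos htR2 _
  rw [inv_eq_one_div, ← div_eq_mul_inv, div_le_div_iff₀ ha hb, one_mul]
  exact hpow
end

section
/- Everywhere on ℝ³ and for all t ≥ 0 one has g_t · ḡ_t ≤ e^{−t|f|}, where g_t = (1+tz²κ(tf))^{−1/2}, ḡ_t = (1+tr²κ(−tf))^{−1/2}, f = x²+y²−z², and κ(s) = (1−e^{−2s})/s (κ(0)=2). -/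
lemma kap_nonneg (s : ℝ) : 0 ≤ kap s :=
  intervalIntegral.integral_nonneg (by norm_num) (fun u _ => (Real.exp_pos _).le)

open intervalIntegral in
lemma mul_kap (s : ℝ) : s * kap s = 1 - Real.exp (-(2 * s)) := by
  rcases eq_or_ne s 0 with rfl | hs
  · simp [kap_zero]
  · have h : kap s = (-s)⁻¹ • ∫ u in (0 * -s)..(2 * -s), Real.exp u := by
      have hcomp := integral_comp_mul_right (a := (0:ℝ)) (b := 2)
        (f := fun u => Real.exp u) (neg_ne_zero.mpr hs)
      rw [kap, ← hcomp]
      simp_rw [show ∀ u : ℝ, -(s * u) = u * -s from fun u => by ring]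
    rw [h, integral_exp,
      show (2 : ℝ) * -s = -(2 * s) by ring, show (0 : ℝ) * -s = 0 by ring, Real.exp_zero,
      smul_eq_mul]
    field_simp
    have he : Real.exp (-(2 * s)) = Real.exp (-(s * 2)) := by ring_nf
    linear_combination (1 - Real.exp (-(s * 2))) * mul_inv_cancel₀ hs + (1 - s * s⁻¹) * he +
      (Real.exp (-(2 * s)) - 1) * mul_inv_cancel₀ hs

lemma kap_neg (s : ℝ) : kap (-s) = Real.exp (2 * s) * kap s := by
  rcases eq_or_ne s 0 with rfl | hs
  · simp
  · have h1 := mul_kap s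
    have h2 := mul_kap (-s)
    rw [show -(2 * -s) = 2 * s by ring] at h2
    have h3 : Real.exp (2 * s) * Real.exp (-(2 * s)) = 1 := by
      rw [← Real.exp_add]
      norm_num
    have key : s * kap (-s) = s * (Real.exp (2 * s) * kap s) := by
      linear_combination (-1 : ℝ) * h2 + (-(Real.exp (2 * s))) * h1 + h3
    exact mul_left_cancel₀ hs key

lemma aux_bound (t z2 r2 : ℝ) (ht : 0 ≤ t) (hz : 0 ≤ z2) (hr : 0 ≤ r2) :
    1 / Real.sqrt (1 + t * z2 * kap (t * (r2 - z2))) *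
      (1 / Real.sqrt (1 + t * r2 * kap (-(t * (r2 - z2))))) ≤
    Real.exp (-(t * |r2 - z2|)) := by
  set s : ℝ := t * (r2 - z2) with hs
  set A : ℝ := 1 + t * z2 * kap s with hA
  set B : ℝ := 1 + t * r2 * kap (-s) with hB
  have hA1 : 1 ≤ A := by
    have h : 0 ≤ t * z2 * kap s := by
      have := kap_nonneg s; positivity
    linarith
  have hB1 : 1 ≤ B := by
    have h : 0 ≤ t * r2 * kap (-s) := by
      have := kap_nonneg (-s); positivity
    linarith
  have hApos : 0 < A := by linarith
  have hBpos : 0 < B := by linarith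
  have hsqA : 1 ≤ Real.sqrt A := by
    rw [show (1 : ℝ) = Real.sqrt 1 by simp]
    exact Real.sqrt_le_sqrt hA1
  have hsqB : 1 ≤ Real.sqrt B := by
    rw [show (1 : ℝ) = Real.sqrt 1 by simp]
    exact Real.sqrt_le_sqrt hB1
  -- key identity : B = exp (2 s) * A
  have hskap : s * kap (-s) = Real.exp (2 * s) - 1 := by
    have h2 := mul_kap (-s)
    rw [show -(2 * -s) = 2 * s by ring] at h2
    linarith
  have hkey : B = Real.exp (2 * s) * A := by
    have hkn := kap_neg s
    have hr2 : t * r2 = s + t * z2 := by rw [hs]; ring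
    rw [hB, hr2, add_mul, hskap, hkn, hA]
    ring
  have e2 : Real.exp (2 * s) = Real.exp s * Real.exp s := by
    rw [← Real.exp_add]; ring_nf
  have hEpos : 0 < Real.exp s := Real.exp_pos s
  have hsB : Real.sqrt B = Real.exp s * Real.sqrt A := by
    have hB' : B = Real.exp s ^ 2 * A := by rw [hkey, e2]; ring
    rw [hB', Real.sqrt_mul (sq_nonneg _), Real.sqrt_sq hEpos.le]
  rw [div_mul_div_comm, one_mul]
  rcases le_or_gt z2 r2 with hzr | hzr
  · -- f = r2 - z2 ≥ 0 : |f| = f, bound exp(-s)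
    have habs : |r2 - z2| = r2 - z2 := abs_of_nonneg (by linarith)
    rw [habs, ← hs, Real.exp_neg]
    have hprod : Real.exp s ≤ Real.sqrt A * Real.sqrt B := by
      rw [hsB]
      nlinarith [hsqA, hEpos]
    calc 1 / (Real.sqrt A * Real.sqrt B) ≤ 1 / Real.exp s :=
          one_div_le_one_div_of_le hEpos hprod
      _ = (Real.exp s)⁻¹ := one_div _
  · -- f < 0 : |f| = -(r2 - z2), bound exp(s)
    have habs : |r2 - z2| = -(r2 - z2) := abs_of_neg (by linarith)
    rw [habs, show -(t * -(r2 - z2)) = s by rw [hs]; ring]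
    have hsA : Real.sqrt A = Real.exp (-s) * Real.sqrt B := by
      have h3 : Real.exp (-s) * Real.exp s = 1 := by
        rw [← Real.exp_add]; norm_num
      have hA' : A = Real.exp (-s) ^ 2 * B := by
        rw [hkey, e2]; linear_combination (-(A * (Real.exp (-s) * Real.exp s + 1))) * h3
      rw [hA', Real.sqrt_mul (sq_nonneg _), Real.sqrt_sq (Real.exp_pos _).le]
    have hprod : Real.exp (-s) ≤ Real.sqrt A * Real.sqrt B := by
      rw [hsA]
      nlinarith [hsqB, Real.exp_pos (-s)]
    calc 1 / (Real.sqrt A * Real.sqrt B) ≤ 1 / Real.exp (-s) :=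
          one_div_le_one_div_of_le (Real.exp_pos _) hprod
      _ = Real.exp s := by rw [Real.exp_neg, one_div, inv_inv]

/-- g_t ḡ_t ≤ e^{−t|f|} for all t ≥ 0 everywhere on ℝ³. -/
theorem gfun_mul_gbar_le (t : ℝ) (ht : 0 ≤ t) (p : ℝ × ℝ × ℝ) :
    gfun t p * gbar t p ≤ Real.exp (-(t * |fCas p|)) := by
  obtain ⟨x, y, z⟩ := p
  have h := aux_bound t (z ^ 2) (x ^ 2 + y ^ 2) ht (by positivity) (by positivity)
  simpa [gfun, gbar, fCas, add_sub_assoc] using h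
end
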